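/- The total energy cost along a route is monotone nondecreasing in the vehicle mass: if energy required on arc k is r_k(M) = α_k·M + β_k with α_k ≥ 0, and battery level evolves as b_k = min(max(b_{k−1} + s_k − r_k(M), 0), B) with fuel shortfall f_k(M) = max(r_k(M) − s_k − b_{k−1}, 0), then for M ≤ M′ the total fuel shortfall satisfies Σ_k f_k(M) ≤ Σ_k f_k(M′). -/

import Mathlib

theorem stmt_13 (B : ℝ) (hB : 0 < B) (n : ℕ) (b0 : ℝ) (hb00 : 0 ≤ b0) (hb0B : b0 ≤ B)
    (α β s : ℕ → ℝ) (hα : ∀ k, 0 ≤ α k) (hs : ∀ k, 0 ≤ s k)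
    (b : ℝ → ℕ → ℝ) (hbinit : ∀ M, b M 0 = b0)
    (hrec : ∀ M k, b M (k + 1) =
      min (max (b M k + s (k + 1) - (α (k + 1) * M + β (k + 1))) 0) B)
    (M M' : ℝ) (hM : 0 ≤ M) (hMM' : M ≤ M')
    (hrM : ∀ k, 0 ≤ α k * M + β k) (hrM' : ∀ k, 0 ≤ α k * M' + β k) :
    ∑ k ∈ Finset.Icc 1 n, max (-(b M (k - 1) + s k - (α k * M + β k))) 0 ≤
      ∑ k ∈ Finset.Icc 1 n, max (-(b M' (k - 1) + s k - (α k * M' + β k))) 0 := by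
  have hmono : ∀ k, b M' k ≤ b M k := by
    intro k
    induction k with
    | zero => rw [hbinit, hbinit]
    | succ k ih =>
      rw [hrec, hrec]
      have hr : α (k+1) * M + β (k+1) ≤ α (k+1) * M' + β (k+1) := by
        have := mul_le_mul_of_nonneg_left hMM' (hα (k+1))
        linarith
      exact min_le_min (max_le_max (by linarith) le_rfl) le_rfl
  apply Finset.sum_le_sum
  intro k _
  have hr : α k * M + β k ≤ α k * M' + β k := by
    have := mul_le_mul_of_nonneg_left hMM' (hα k)
    linarith
  have := hmono (k - 1)
  exact max_le_max (by linarith) le_rfl
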